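/- Let κ > 0, τ > 0 and γ < 0 be real numbers. Then every complex root λ of the quadratic τλ² + (1 − τκ − τγ)λ − γ = 0 has strictly negative real part if and only if τ(κ + γ) < 1. In particular, when κ + γ > 0 this holds exactly for 0 < τ < 1/(κ + γ). -/

import Mathlib

/-- Routh–Hurwitz for a real quadratic with positive leading and constant
coefficients: all complex roots have negative real part iff the middle
coefficient is positive. -/
lemma quad_roots_neg_re (a b c : ℝ) (ha : 0 < a) (hc : 0 < c) :
    (∀ lam : ℂ, (a : ℂ) * lam ^ 2 + (b : ℂ) * lam + (c : ℂ) = 0 → lam.re < 0) ↔ 0 < b := by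
  have ha' : (a : ℂ) ≠ 0 := by exact_mod_cast ha.ne'
  constructor
  · intro h
    by_contra hb
    push_neg at hb
    set D : ℝ := b ^ 2 - 4 * a * c with hDdef
    rcases le_or_gt 0 D with hD | hD
    · -- real root (-b + √D)/(2a), which is ≥ 0
      set s : ℝ := Real.sqrt D with hs
      have hs2 : s ^ 2 = D := Real.sq_sqrt hD
      have hsnn : 0 ≤ s := Real.sqrt_nonneg _
      set x : ℝ := (-b + s) / (2 * a) with hx
      have hroot : a * x ^ 2 + b * x + c = 0 := by
        have h2ax : 2 * a * x + b = s := by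
          rw [hx]; field_simp; ring
        nlinarith [hs2, h2ax]
      have := h (x : ℂ) (by exact_mod_cast congrArg (Complex.ofReal) hroot)
      have hx0 : 0 ≤ x := by
        apply div_nonneg _ (by linarith)
        linarith
      simp at this
      linarith
    · -- complex root with re = -b/(2a) ≥ 0
      set s : ℝ := Real.sqrt (-D) with hs
      have hs2 : s ^ 2 = -D := Real.sq_sqrt (by linarith)
      set lam : ℂ := ((-b / (2 * a) : ℝ) : ℂ) + ((s / (2 * a) : ℝ) : ℂ) * Complex.I with hlam
      have hs2' : ((s : ℂ)) ^ 2 = -(b : ℂ) ^ 2 + 4 * (a : ℂ) * (c : ℂ) := by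
        have : (s : ℝ) ^ 2 = -b ^ 2 + 4 * a * c := by rw [hs2, hDdef]; ring
        exact_mod_cast congrArg (Complex.ofReal) this
      have hstep : 2 * (a : ℂ) * lam + (b : ℂ) = (s : ℂ) * Complex.I := by
        rw [hlam]; push_cast; field_simp; ring
      have h2 : (2 * (a : ℂ) * lam + (b : ℂ)) ^ 2 = (b : ℂ) ^ 2 - 4 * a * c := by
        rw [hstep]
        linear_combination (s : ℂ) ^ 2 * Complex.I_sq - hs2'
      have hroot : (a : ℂ) * lam ^ 2 + (b : ℂ) * lam + (c : ℂ) = 0 := by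
        have h4 : (4 : ℂ) * a ≠ 0 := by simp [ha']
        apply mul_left_cancel₀ h4
        rw [mul_zero]
        linear_combination h2
      have hlt := h lam hroot
      have hre : lam.re = -b / (2 * a) := by
        rw [hlam]
        simp only [Complex.add_re, Complex.ofReal_re, Complex.mul_re, Complex.I_re,
          Complex.I_im, Complex.ofReal_im]
        ring
      rw [hre] at hlt
      rcases div_neg_iff.mp hlt with ⟨h1, h2'⟩ | ⟨h1, h2'⟩
      · linarith
      · linarith
  · intro hb lam hlam
    have hre := congrArg Complex.re hlam
    have him := congrArg Complex.im hlam
    simp [pow_two, Complex.mul_re, Complex.mul_im, Complex.add_re, Complex.add_im,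
      Complex.sub_re, Complex.sub_im] at hre him
    have h1 : a * (lam.re * lam.re - lam.im * lam.im) + b * lam.re + c = 0 := by
      linear_combination hre
    have h2 : lam.im * (2 * a * lam.re + b) = 0 := by
      linear_combination him
    by_contra hx
    push_neg at hx
    rcases mul_eq_zero.mp h2 with hy | hxb
    · rw [hy] at h1
      nlinarith
    · nlinarith

theorem stmt_6 (κ τ γ : ℝ) (hκ : 0 < κ) (hτ : 0 < τ) (hγ : γ < 0) :
    ((∀ lam : ℂ,
        (τ : ℂ) * lam ^ 2 + (1 - (τ : ℂ) * (κ : ℂ) - (τ : ℂ) * (γ : ℂ)) * lam - (γ : ℂ) = 0 →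
        lam.re < 0) ↔ τ * (κ + γ) < 1) ∧
    (0 < κ + γ →
      ((∀ lam : ℂ,
          (τ : ℂ) * lam ^ 2 + (1 - (τ : ℂ) * (κ : ℂ) - (τ : ℂ) * (γ : ℂ)) * lam - (γ : ℂ) = 0 →
          lam.re < 0) ↔ 0 < τ ∧ τ < 1 / (κ + γ))) := by
  have key : (∀ lam : ℂ,
      (τ : ℂ) * lam ^ 2 + (1 - (τ : ℂ) * (κ : ℂ) - (τ : ℂ) * (γ : ℂ)) * lam - (γ : ℂ) = 0 →
      lam.re < 0) ↔ τ * (κ + γ) < 1 := by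
    have h := quad_roots_neg_re τ (1 - τ * (κ + γ)) (-γ) hτ (by linarith)
    constructor
    · intro hall
      have := h.mp (fun lam hl => hall lam (by push_cast at hl ⊢; linear_combination hl))
      linarith
    · intro hlt lam hl
      exact h.mpr (by linarith) lam (by push_cast at hl ⊢; linear_combination hl)
  refine ⟨key, fun hkg => ?_⟩
  rw [key]
  constructor
  · intro h
    exact ⟨hτ, (lt_div_iff₀ hkg).mpr h⟩
  · rintro ⟨-, h⟩
    exact (lt_div_iff₀ hkg).mp h
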